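/- The effective road Hamiltonian H_r is strictly convex on ℝ and coercive, i.e., H_r(q)/|q| → +∞ as |q| → ∞. -/

import Mathlib

open Real Filter Set

noncomputable section

/-- The field Lagrangian `L_f(v₁,v₂) = (v₁² + v₂²)/4 − 1`. -/
def Lf (v₁ v₂ : ℝ) : ℝ := (v₁ ^ 2 + v₂ ^ 2) / 4 - 1

/-- The effective road Hamiltonian `H_r(q) = q² + (p_q)² + 1` built from the
critical-slope function `pq`. -/
def Hr (pq : ℝ → ℝ) (q : ℝ) : ℝ := q ^ 2 + pq q ^ 2 + 1

/-- The road Lagrangian: the Legendre transform of `Hr`. -/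
def Lr (pq : ℝ → ℝ) (v : ℝ) : ℝ := ⨆ q : ℝ, (v * q - Hr pq q)

/-- `pq` assigns to each `q` the critical slope `p_q`: it equals `0` when
`(D−1)q² ≤ 1`, and otherwise it is the unique positive root of
`(D−1)q² = p² + 1 + μp/(κν + p)`. -/
def IsCriticalSlope (D μ ν κ : ℝ) (pq : ℝ → ℝ) : Prop :=
  ∀ q : ℝ,
    ((D - 1) * q ^ 2 ≤ 1 → pq q = 0) ∧
    (1 < (D - 1) * q ^ 2 →
      0 < pq q ∧ (D - 1) * q ^ 2 = pq q ^ 2 + 1 + μ * pq q / (κ * ν + pq q))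

/-- The set of candidate costs in the control problem at a point `(x,y)` with
`x ≥ 0`, `y ≥ 0`: the pure-field cost, the broken road-then-field costs, and
(when `y = 0`) the pure-road cost. -/
def Jset (pq : ℝ → ℝ) (x y : ℝ) : Set ℝ :=
  {Lf x y} ∪
    {c | ∃ τ z : ℝ, 0 < τ ∧ τ < 1 ∧ 0 ≤ z ∧ z ≤ x ∧
      c = (1 - τ) * Lf ((x - z) / (1 - τ)) (y / (1 - τ)) + τ * Lr pq (z / τ)} ∪
    (if y = 0 then {Lr pq x} else ∅)

/-- The value function `J(x,y)`, extended evenly in `x`. -/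
def J (pq : ℝ → ℝ) (x y : ℝ) : ℝ := sInf (Jset pq |x| y)
/-- The field Hamiltonian `H_f(q,p) = q² + p² + 1`. -/
def Hf (q p : ℝ) : ℝ := q ^ 2 + p ^ 2 + 1

/-- The road boundary Hamiltonian `F₀(q,p) = Dq² − μp/(κν + p)`. -/
def F0 (D μ ν κ q p : ℝ) : ℝ := D * q ^ 2 - μ * p / (κ * ν + p)

/-- The spreading speed along the road, `inf_{q>0} H_r(q)/q`. -/
def roadSpeed (pq : ℝ → ℝ) : ℝ := sInf ((fun q => Hr pq q / q) '' Set.Ioi (0 : ℝ))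

/-- The directional spreading speed in direction `ϑ` (measured from the
positive `y`-axis). -/
def cstar (pq : ℝ → ℝ) (ϑ : ℝ) : ℝ :=
  sSup {r : ℝ | 0 ≤ r ∧ J pq (r * Real.sin ϑ) (r * Real.cos ϑ) ≤ 0}

/-- Reflection across the line through the origin in direction `(cos a, sin a)`. -/
def Psi (a : ℝ) (p : ℝ × ℝ) : ℝ × ℝ :=
  (p.1 * Real.cos (2 * a) + p.2 * Real.sin (2 * a),
   p.1 * Real.sin (2 * a) - p.2 * Real.cos (2 * a))

/-- The closed cone of opening angle `2a` between the positive `x`-axis and the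
ray at angle `π/2 − 2a` from the positive `y`-axis. -/
def coneA (a : ℝ) : Set (ℝ × ℝ) :=
  {p | ∃ r ϑ : ℝ, 0 ≤ r ∧ π / 2 - 2 * a ≤ ϑ ∧ ϑ ≤ π / 2 ∧
    p = (r * Real.sin ϑ, r * Real.cos ϑ)}

/-- `φ(u) = u + 1 + μ√u/(c+√u)` is monotone. -/
lemma phi_aux_mono (μ c : ℝ) (hμ : 0 < μ) (hc : 0 < c) {u v : ℝ} (hu : 0 ≤ u) (hv : 0 ≤ v)
    (h : u + 1 + μ * Real.sqrt u / (c + Real.sqrt u) ≤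
      v + 1 + μ * Real.sqrt v / (c + Real.sqrt v)) : u ≤ v := by
  by_contra hlt
  push_neg at hlt
  have hsv : Real.sqrt v ≤ Real.sqrt u := Real.sqrt_le_sqrt hlt.le
  have hsu0 : 0 ≤ Real.sqrt u := Real.sqrt_nonneg u
  have hsv0 : 0 ≤ Real.sqrt v := Real.sqrt_nonneg v
  have hA : 0 < c + Real.sqrt u := by linarith
  have hB : 0 < c + Real.sqrt v := by linarith
  have hmono : μ * Real.sqrt v / (c + Real.sqrt v) ≤ μ * Real.sqrt u / (c + Real.sqrt u) := by
    rw [div_le_div_iff₀ hB hA]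
    nlinarith [mul_nonneg hμ.le (sub_nonneg.2 hsv)]
  linarith

/-- `φ` is concave on nonnegative reals. -/
lemma phi_aux_concave (μ c : ℝ) (hμ : 0 < μ) (hc : 0 < c) {a b t : ℝ}
    (ha : 0 ≤ a) (hb : 0 ≤ b) (ht0 : 0 ≤ t) (ht1 : t ≤ 1) :
    t * (a + 1 + μ * Real.sqrt a / (c + Real.sqrt a)) +
      (1 - t) * (b + 1 + μ * Real.sqrt b / (c + Real.sqrt b)) ≤
    (t * a + (1 - t) * b) + 1 +
      μ * Real.sqrt (t * a + (1 - t) * b) / (c + Real.sqrt (t * a + (1 - t) * b)) := by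
  set sa := Real.sqrt a with hsa
  set sb := Real.sqrt b with hsb
  set sm := Real.sqrt (t * a + (1 - t) * b) with hsm
  have h1t : 0 ≤ 1 - t := by linarith
  have hsa0 : 0 ≤ sa := Real.sqrt_nonneg a
  have hsb0 : 0 ≤ sb := Real.sqrt_nonneg b
  have hsm0 : 0 ≤ sm := Real.sqrt_nonneg _
  have hsa2 : sa ^ 2 = a := Real.sq_sqrt ha
  have hsb2 : sb ^ 2 = b := Real.sq_sqrt hb
  have hA : 0 < c + sa := by linarith
  have hB : 0 < c + sb := by linarith
  have hM : 0 < c + sm := by linarith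
  have hcomb : 0 ≤ t * sa + (1 - t) * sb := by positivity
  have hM' : 0 < c + (t * sa + (1 - t) * sb) := by linarith
  -- sqrt is concave
  have hsmge : t * sa + (1 - t) * sb ≤ sm := by
    rw [hsm]
    rw [show t * a + (1 - t) * b = t * sa ^ 2 + (1 - t) * sb ^ 2 by rw [hsa2, hsb2]]
    rw [Real.le_sqrt hcomb]
    · nlinarith [mul_nonneg ht0 h1t, sq_nonneg (sa - sb)]
    · positivity
  -- g(x) = x/(c+x) is monotone
  have hg1 : (t * sa + (1 - t) * sb) / (c + (t * sa + (1 - t) * sb)) ≤ sm / (c + sm) := by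
    rw [div_le_div_iff₀ hM' hM]
    nlinarith [sub_nonneg.2 hsmge]
  -- g is concave
  have hg2 : t * (sa / (c + sa)) + (1 - t) * (sb / (c + sb)) ≤
      (t * sa + (1 - t) * sb) / (c + (t * sa + (1 - t) * sb)) := by
    rw [← mul_div_assoc, ← mul_div_assoc, div_add_div _ _ (ne_of_gt hA) (ne_of_gt hB),
      div_le_div_iff₀ (by positivity) hM']
    nlinarith [mul_nonneg (mul_nonneg (mul_nonneg hc.le ht0) h1t) (sq_nonneg (sa - sb))]
  have hchain : t * (sa / (c + sa)) + (1 - t) * (sb / (c + sb)) ≤ sm / (c + sm) :=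
    le_trans hg2 hg1
  have hmu : t * (μ * sa / (c + sa)) + (1 - t) * (μ * sb / (c + sb)) ≤
      μ * sm / (c + sm) := by
    have := mul_le_mul_of_nonneg_left hchain hμ.le
    calc t * (μ * sa / (c + sa)) + (1 - t) * (μ * sb / (c + sb))
        = μ * (t * (sa / (c + sa)) + (1 - t) * (sb / (c + sb))) := by ring
      _ ≤ μ * (sm / (c + sm)) := this
      _ = μ * sm / (c + sm) := by ring
  nlinarith [hmu]

/-- The effective road Hamiltonian `H_r` is strictly convex on `ℝ` and
coercive: `H_r(q)/|q| → +∞` as `|q| → ∞`. -/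
theorem Hr_strictConvex_and_coercive
    (D μ ν κ : ℝ) (hD : 1 < D) (hμ : 0 < μ) (hν : 0 < ν) (hκ : 0 < κ)
    (pq : ℝ → ℝ) (hpq : IsCriticalSlope D μ ν κ pq) :
    StrictConvexOn ℝ Set.univ (Hr pq) ∧
      Tendsto (fun q : ℝ => Hr pq q / |q|) (cocompact ℝ) atTop := by
  have hc : 0 < κ * ν := mul_pos hκ hν
  set c := κ * ν with hcdef
  have hD1 : 0 ≤ D - 1 := by linarith
  have hpq0 : ∀ q, 0 ≤ pq q := by
    intro q
    rcases le_or_gt ((D - 1) * q ^ 2) 1 with h | h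
    · rw [(hpq q).1 h]
    · exact ((hpq q).2 h).1.le
  -- key identity: φ(pq q ^ 2) = max ((D-1) q²) 1
  have hkey : ∀ q, pq q ^ 2 + 1 + μ * Real.sqrt (pq q ^ 2) / (c + Real.sqrt (pq q ^ 2)) =
      max ((D - 1) * q ^ 2) 1 := by
    intro q
    rw [Real.sqrt_sq (hpq0 q)]
    rcases le_or_gt ((D - 1) * q ^ 2) 1 with h | h
    · rw [(hpq q).1 h, max_eq_right h]; simp
    · rw [max_eq_left h.le, ((hpq q).2 h).2]
  -- convexity of pq²
  have hconv : ConvexOn ℝ Set.univ (fun q => pq q ^ 2) := by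
    refine ⟨convex_univ, ?_⟩
    intro x _ y _ t s ht hs hts
    have hs' : s = 1 - t := by linarith
    subst hs'
    simp only [smul_eq_mul]
    have hux : 0 ≤ pq x ^ 2 := sq_nonneg _
    have huy : 0 ≤ pq y ^ 2 := sq_nonneg _
    have hum : 0 ≤ pq (t * x + (1 - t) * y) ^ 2 := sq_nonneg _
    have hcombo : 0 ≤ t * pq x ^ 2 + (1 - t) * pq y ^ 2 := by positivity
    refine phi_aux_mono μ c hμ hc hum hcombo ?_
    rw [hkey]
    calc max ((D - 1) * (t * x + (1 - t) * y) ^ 2) 1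
        ≤ t * max ((D - 1) * x ^ 2) 1 + (1 - t) * max ((D - 1) * y ^ 2) 1 := by
          refine max_le ?_ ?_
          · calc (D - 1) * (t * x + (1 - t) * y) ^ 2
                ≤ t * ((D - 1) * x ^ 2) + (1 - t) * ((D - 1) * y ^ 2) := by
                  nlinarith [mul_nonneg ht hs, sq_nonneg (x - y),
                    mul_nonneg (mul_nonneg ht hs) (mul_nonneg hD1 (sq_nonneg (x - y)))]
              _ ≤ t * max ((D - 1) * x ^ 2) 1 + (1 - t) * max ((D - 1) * y ^ 2) 1 := by
                  gcongr <;> [exact le_max_left _ _; exact le_max_left _ _]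
          · calc (1 : ℝ) = t * 1 + (1 - t) * 1 := by ring
              _ ≤ t * max ((D - 1) * x ^ 2) 1 + (1 - t) * max ((D - 1) * y ^ 2) 1 := by
                  gcongr <;> [exact le_max_right _ _; exact le_max_right _ _]
      _ = t * (pq x ^ 2 + 1 + μ * Real.sqrt (pq x ^ 2) / (c + Real.sqrt (pq x ^ 2))) +
          (1 - t) * (pq y ^ 2 + 1 + μ * Real.sqrt (pq y ^ 2) / (c + Real.sqrt (pq y ^ 2))) := by
          rw [hkey, hkey]
      _ ≤ _ := phi_aux_concave μ c hμ hc hux huy ht (by linarith)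
  constructor
  · have hsq : StrictConvexOn ℝ (Set.univ : Set ℝ) (fun q : ℝ => q ^ 2) :=
      Even.strictConvexOn_pow even_two two_ne_zero
    have := (hsq.add_convexOn hconv).add_const 1
    exact this
  · have habs : Tendsto (fun q : ℝ => |q|) (cocompact ℝ) atTop := by
      exact (tendsto_norm_cocompact_atTop (E := ℝ)).congr Real.norm_eq_abs
    refine tendsto_atTop_mono' _ ?_ habs
    filter_upwards [habs.eventually_ge_atTop 1] with q hq
    have hq0 : (0 : ℝ) < |q| := lt_of_lt_of_le one_pos hq
    rw [le_div_iff₀ hq0]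
    have : |q| * |q| = q ^ 2 := by rw [abs_mul_abs_self]; ring
    rw [this]
    have := sq_nonneg (pq q)
    simp only [Hr]
    nlinarith
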